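/- Let ψ₁, ψ₂, ψ₃ be density matrices on A ⊗ C₁, C₂ ⊗ D₁ and D₂ ⊗ B respectively, and set ψ = ψ₁ ⊗ ψ₂ ⊗ ψ₃, regarded as a state shared by Alice (A), Bob (B) and two helpers C = C₁ ⊗ C₂ and D = D₁ ⊗ D₂. Then: (i) I(AC⟩BD)_ψ = I(C₂⟩D₁)_{ψ₂} − S(AC₁)_{ψ₁}; (ii) I(ACD⟩B)_ψ = I(D₂⟩B)_{ψ₃} − S(AC₁)_{ψ₁} − S(C₂D₁)_{ψ₂}; (iii) I(A⟩BCD)_ψ = I(A⟩C₁)_{ψ₁}. Consequently the minimum cut coherent information satisfies I^c_min(ψ, A:B) ≤ min{ I(A⟩C₁)_{ψ₁} , I(C₂⟩D₁)_{ψ₂} , I(D₂⟩B)_{ψ₃} }. -/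

import Mathlib

open Matrix Polynomial
open scoped ComplexOrder Kronecker

/-- von Neumann entropy `S(ρ) = -Tr(ρ log₂ ρ)` of a (Hermitian) matrix, computed from
its eigenvalues. -/
noncomputable def vNEntropy {n : Type*} [Fintype n] [DecidableEq n] (ρ : Matrix n n ℂ) : ℝ :=
  if h : ρ.IsHermitian then -∑ i, (h.eigenvalues i) * Real.logb 2 (h.eigenvalues i) else 0

section
variable {α β : Type*} [Fintype α] [Fintype β] [DecidableEq α] [DecidableEq β]

/-- Partial trace over the left factor of a bipartite state on `α ⊗ β`. -/
noncomputable def trLeft (ρ : Matrix (α × β) (α × β) ℂ) : Matrix β β ℂ :=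
  fun b b' => ∑ a, ρ (a, b) (a, b')

end

section aux
variable {n m : Type*} [Fintype n] [Fintype m] [DecidableEq n] [DecidableEq m]

lemma charpoly_conj (P M Q : Matrix n n ℂ) (h : P * Q = 1) :
    (P * M * Q).charpoly = M.charpoly := by
  have hmap : ∀ (A B : Matrix n n ℂ),
      (A * B).map (Polynomial.C : ℂ →+* ℂ[X]) = A.map C * B.map C := fun A B =>
    Matrix.map_mul
  have hPQ : P.map (Polynomial.C : ℂ →+* ℂ[X]) * Q.map C = 1 := by
    rw [← hmap, h]; exact Matrix.map_one _ (map_zero C) (map_one C)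
  have hQP : Q.map (Polynomial.C : ℂ →+* ℂ[X]) * P.map C = 1 :=
    mul_eq_one_comm.mp hPQ
  have key : charmatrix (P * M * Q) = P.map C * charmatrix M * Q.map C := by
    unfold charmatrix
    simp only [RingHom.mapMatrix_apply]
    rw [mul_sub, sub_mul, hmap, hmap, mul_assoc]
    congr 1
    rw [mul_assoc, (scalar_commute (X : ℂ[X]) (Commute.all _) (Q.map C)).eq, ← mul_assoc, hPQ,
      one_mul]
  rw [Matrix.charpoly, Matrix.charpoly, key, det_mul, det_mul, mul_comm, ← mul_assoc,
    ← det_mul, hQP, det_one, one_mul]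

lemma charpoly_diag (d : n → ℂ) :
    (Matrix.diagonal d).charpoly = ∏ i, (X - C (d i)) := by
  have : charmatrix (Matrix.diagonal d) = Matrix.diagonal fun i => X - C (d i) := by
    ext i j
    rcases eq_or_ne i j with rfl | hij
    · simp [charmatrix_apply_eq]
    · simp [charmatrix_apply_ne _ _ _ hij, Matrix.diagonal_apply_ne _ hij]
  rw [Matrix.charpoly, this, det_diagonal]

lemma charpoly_hermitian {M : Matrix n n ℂ} (hM : M.IsHermitian) :
    M.charpoly = ∏ i, (X - C (hM.eigenvalues i : ℂ)) := by
  conv_lhs => rw [hM.spectral_theorem]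
  rw [Unitary.conjStarAlgAut_apply, charpoly_conj _ _ _ (Matrix.mem_unitaryGroup_iff.mp (hM.eigenvectorUnitary).2),
    charpoly_diag]
  rfl

end aux

section aux2
variable {n m ι : Type*} [Fintype n] [Fintype m] [Fintype ι] [DecidableEq n] [DecidableEq m]

lemma sum_f_eigenvalues {M : Matrix n n ℂ} (hM : M.IsHermitian) (v : ι → ℝ)
    (hch : M.charpoly = ∏ i, (X - C (v i : ℂ))) (f : ℝ → ℝ) :
    ∑ i, f (hM.eigenvalues i) = ∑ i, f (v i) := by
  have h1 : (Finset.univ.val.map fun i => ((hM.eigenvalues i : ℝ) : ℂ))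
      = Finset.univ.val.map fun i : ι => ((v i : ℝ) : ℂ) := by
    have e1 : M.charpoly = ((Finset.univ.val.map fun i =>
        ((hM.eigenvalues i : ℝ) : ℂ)).map fun a => X - C a).prod := by
      rw [charpoly_hermitian hM, Finset.prod_eq_multiset_prod, Multiset.map_map]
      rfl
    have e2 : M.charpoly = ((Finset.univ.val.map fun i : ι =>
        ((v i : ℝ) : ℂ)).map fun a => X - C a).prod := by
      rw [hch, Finset.prod_eq_multiset_prod, Multiset.map_map]; rfl
    have := congrArg Polynomial.roots (e1.symm.trans e2)
    rwa [roots_multiset_prod_X_sub_C, roots_multiset_prod_X_sub_C] at this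
  have h2 := congrArg (fun s : Multiset ℂ => (s.map fun z => f z.re).sum) h1
  simp only [Multiset.map_map, Function.comp, Complex.ofReal_re] at h2
  rw [Finset.sum_eq_multiset_sum, Finset.sum_eq_multiset_sum]
  exact h2

lemma vNEntropy_of_charpoly {M : Matrix n n ℂ} (hM : M.IsHermitian) (v : ι → ℝ)
    (hch : M.charpoly = ∏ i, (X - C (v i : ℂ))) :
    vNEntropy M = -∑ i, v i * Real.logb 2 (v i) := by
  rw [vNEntropy, dif_pos hM,
    sum_f_eigenvalues hM v hch (fun x => x * Real.logb 2 x)]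

lemma vNEntropy_submatrix (e : m ≃ n) {M : Matrix n n ℂ} (hM : M.IsHermitian) :
    vNEntropy (M.submatrix e e) = vNEntropy M := by
  have hs : (M.submatrix e e).IsHermitian := hM.submatrix e
  have hch : (M.submatrix e e).charpoly = ∏ i, (X - C (hM.eigenvalues i : ℂ)) := by
    have : M.submatrix e e = Matrix.reindex e.symm e.symm M := rfl
    rw [this, Matrix.charpoly_reindex, charpoly_hermitian hM]
  rw [vNEntropy_of_charpoly hs _ hch, vNEntropy, dif_pos hM]

lemma trace_eq_sum_eig {M : Matrix n n ℂ} (hM : M.IsHermitian) :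
    M.trace = ∑ i, (hM.eigenvalues i : ℂ) := by
  conv_lhs => rw [hM.spectral_theorem]
  rw [Unitary.conjStarAlgAut_apply, Matrix.trace_mul_cycle,
    Matrix.mem_unitaryGroup_iff'.mp (hM.eigenvectorUnitary).2, one_mul, Matrix.trace_diagonal]
  rfl

end aux2

section aux3
variable {n m : Type*} [Fintype n] [Fintype m] [DecidableEq n] [DecidableEq m]

lemma kron_isHermitian {ρ : Matrix n n ℂ} {σ : Matrix m m ℂ}
    (hρ : ρ.IsHermitian) (hσ : σ.IsHermitian) : (ρ ⊗ₖ σ).IsHermitian := by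
  ext ⟨a, b⟩ ⟨c, d⟩
  simp only [Matrix.conjTranspose_apply, Matrix.kroneckerMap_apply, star_mul', mul_comm]
  rw [← Matrix.conjTranspose_apply, ← Matrix.conjTranspose_apply, hρ.eq, hσ.eq, mul_comm]

lemma kron_charpoly {ρ : Matrix n n ℂ} {σ : Matrix m m ℂ}
    (hρ : ρ.IsHermitian) (hσ : σ.IsHermitian) :
    (ρ ⊗ₖ σ).charpoly
      = ∏ p : n × m, (X - C ((hρ.eigenvalues p.1 * hσ.eigenvalues p.2 : ℝ) : ℂ)) := by
  conv_lhs => rw [hρ.spectral_theorem, hσ.spectral_theorem]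
  rw [Unitary.conjStarAlgAut_apply, Unitary.conjStarAlgAut_apply, Matrix.mul_kronecker_mul, Matrix.mul_kronecker_mul]
  rw [charpoly_conj _ _ _ (by
    rw [← Matrix.mul_kronecker_mul,
      Matrix.mem_unitaryGroup_iff.mp (hρ.eigenvectorUnitary).2,
      Matrix.mem_unitaryGroup_iff.mp (hσ.eigenvectorUnitary).2,
      Matrix.one_kronecker_one])]
  rw [Matrix.diagonal_kronecker_diagonal, charpoly_diag]
  apply Finset.prod_congr rfl
  intro p _
  push_cast
  rfl

lemma sum_eig_eq_one {M : Matrix n n ℂ} (hM : M.IsHermitian) (htr : M.trace = 1) :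
    ∑ i, hM.eigenvalues i = 1 := by
  have h : ((∑ i, hM.eigenvalues i : ℝ) : ℂ) = 1 := by
    push_cast
    rw [← trace_eq_sum_eig hM, htr]
  exact_mod_cast h

lemma vNEntropy_kron {ρ : Matrix n n ℂ} {σ : Matrix m m ℂ}
    (hρ : ρ.IsHermitian) (hσ : σ.IsHermitian) (hρt : ρ.trace = 1) (hσt : σ.trace = 1) :
    vNEntropy (ρ ⊗ₖ σ) = vNEntropy ρ + vNEntropy σ := by
  have hρs := sum_eig_eq_one hρ hρt
  have hσs := sum_eig_eq_one hσ hσt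
  rw [vNEntropy_of_charpoly (kron_isHermitian hρ hσ)
    (fun p : n × m => hρ.eigenvalues p.1 * hσ.eigenvalues p.2) (kron_charpoly hρ hσ),
    vNEntropy, dif_pos hρ, vNEntropy, dif_pos hσ]
  rw [Fintype.sum_prod_type]
  have key : ∀ (x y : ℝ), x * y * Real.logb 2 (x * y)
      = x * (y * Real.logb 2 y) + y * (x * Real.logb 2 x) := by
    intro x y
    rcases eq_or_ne x 0 with rfl | hx; · simp
    rcases eq_or_ne y 0 with rfl | hy; · simp
    rw [Real.logb, Real.log_mul hx hy]
    unfold Real.logb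
    field_simp
    ring
  simp only [key]
  simp only [Finset.sum_add_distrib, ← Finset.mul_sum, ← Finset.sum_mul]
  rw [hρs, hσs]
  ring

end aux3



section aux4
variable {α β : Type*} [Fintype α] [Fintype β] [DecidableEq α] [DecidableEq β]

lemma trLeft_isHermitian {ρ : Matrix (α × β) (α × β) ℂ} (h : ρ.IsHermitian) :
    (trLeft ρ).IsHermitian := by
  ext b b'
  show star (trLeft ρ b' b) = trLeft ρ b b'
  simp only [trLeft, star_sum]
  refine Finset.sum_congr rfl fun a _ => ?_
  rw [← Matrix.conjTranspose_apply, h.eq]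

lemma trLeft_trace (ρ : Matrix (α × β) (α × β) ℂ) : (trLeft ρ).trace = ρ.trace := by
  simp only [Matrix.trace, Matrix.diag, trLeft]
  rw [Fintype.sum_prod_type]
  exact Finset.sum_comm

lemma vNEntropy_nonneg {M : Matrix α α ℂ} (hM : M.PosSemidef) (htr : M.trace = 1) :
    0 ≤ vNEntropy M := by
  rw [vNEntropy, dif_pos hM.1, neg_nonneg]
  apply Finset.sum_nonpos
  intro i _
  have h0 := hM.eigenvalues_nonneg i
  have h1 : hM.1.eigenvalues i ≤ 1 := by
    rw [← sum_eig_eq_one hM.1 htr]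
    exact Finset.single_le_sum (fun j _ => hM.eigenvalues_nonneg j) (Finset.mem_univ i)
  exact mul_nonpos_iff.mpr (Or.inl ⟨h0, Real.logb_nonpos one_lt_two h0 h1⟩)

end aux4

section
variable {A B C₁ C₂ D₁ D₂ : Type*}
  [Fintype A] [Fintype B] [Fintype C₁] [Fintype C₂] [Fintype D₁] [Fintype D₂]
  [DecidableEq A] [DecidableEq B] [DecidableEq C₁] [DecidableEq C₂]
  [DecidableEq D₁] [DecidableEq D₂]

/-- The state `ψ = ψ₁ ⊗ ψ₂ ⊗ ψ₃` on `A ⊗ B ⊗ C₁ ⊗ C₂ ⊗ D₁ ⊗ D₂`, where `ψ₁` lives on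
`A ⊗ C₁`, `ψ₂` on `C₂ ⊗ D₁` and `ψ₃` on `D₂ ⊗ B`; the helpers are `C = C₁ ⊗ C₂` and
`D = D₁ ⊗ D₂`. -/
noncomputable def chainState (ψ₁ : Matrix (A × C₁) (A × C₁) ℂ)
    (ψ₂ : Matrix (C₂ × D₁) (C₂ × D₁) ℂ) (ψ₃ : Matrix (D₂ × B) (D₂ × B) ℂ) :
    Matrix (A × B × C₁ × C₂ × D₁ × D₂) (A × B × C₁ × C₂ × D₁ × D₂) ℂ :=
  fun p q =>
    ψ₁ (p.1, p.2.2.1) (q.1, q.2.2.1) * ψ₂ (p.2.2.2.1, p.2.2.2.2.1) (q.2.2.2.1, q.2.2.2.2.1) *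
      ψ₃ (p.2.2.2.2.2, p.2.1) (q.2.2.2.2.2, q.2.1)

variable (ψ : Matrix (A × B × C₁ × C₂ × D₁ × D₂) (A × B × C₁ × C₂ × D₁ × D₂) ℂ)

/-- Reduced state on `B ⊗ D₁ ⊗ D₂`. -/
noncomputable def redBD (ψ : Matrix (A × B × C₁ × C₂ × D₁ × D₂) (A × B × C₁ × C₂ × D₁ × D₂) ℂ) :
    Matrix (B × D₁ × D₂) (B × D₁ × D₂) ℂ :=
  fun p q => ∑ a, ∑ c₁, ∑ c₂,
    ψ (a, p.1, c₁, c₂, p.2.1, p.2.2) (a, q.1, c₁, c₂, q.2.1, q.2.2)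

/-- Reduced state on `B`. -/
noncomputable def redB6 (ψ : Matrix (A × B × C₁ × C₂ × D₁ × D₂) (A × B × C₁ × C₂ × D₁ × D₂) ℂ) :
    Matrix B B ℂ :=
  fun b b' => ∑ a, ∑ c₁, ∑ c₂, ∑ d₁, ∑ d₂,
    ψ (a, b, c₁, c₂, d₁, d₂) (a, b', c₁, c₂, d₁, d₂)

/-- Reduced state on `B ⊗ C₁ ⊗ C₂ ⊗ D₁ ⊗ D₂` (trace out `A`). -/
noncomputable def redBCD (ψ : Matrix (A × B × C₁ × C₂ × D₁ × D₂) (A × B × C₁ × C₂ × D₁ × D₂) ℂ) :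
    Matrix (B × C₁ × C₂ × D₁ × D₂) (B × C₁ × C₂ × D₁ × D₂) ℂ :=
  fun p q => ∑ a, ψ (a, p.1, p.2.1, p.2.2.1, p.2.2.2.1, p.2.2.2.2)
    (a, q.1, q.2.1, q.2.2.1, q.2.2.2.1, q.2.2.2.2)

/-- Reduced state on `B ⊗ C₁ ⊗ C₂` (trace out `A` and `D`). -/
noncomputable def redBC6 (ψ : Matrix (A × B × C₁ × C₂ × D₁ × D₂) (A × B × C₁ × C₂ × D₁ × D₂) ℂ) :
    Matrix (B × C₁ × C₂) (B × C₁ × C₂) ℂ :=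
  fun p q => ∑ a, ∑ d₁, ∑ d₂,
    ψ (a, p.1, p.2.1, p.2.2, d₁, d₂) (a, q.1, q.2.1, q.2.2, d₁, d₂)

/-- `I(A⟩BCD)_ψ` (cut `T = ∅`). -/
noncomputable def cutEmpty : ℝ := vNEntropy (redBCD ψ) - vNEntropy ψ

/-- `I(AC⟩BD)_ψ` (cut `T = {C}`). -/
noncomputable def cutC : ℝ := vNEntropy (redBD ψ) - vNEntropy ψ

/-- `I(AD⟩BC)_ψ` (cut `T = {D}`). -/
noncomputable def cutD : ℝ := vNEntropy (redBC6 ψ) - vNEntropy ψ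

/-- `I(ACD⟩B)_ψ` (cut `T = {C, D}`). -/
noncomputable def cutCD : ℝ := vNEntropy (redB6 ψ) - vNEntropy ψ

/-- Minimum cut coherent information `I^c_min(ψ, A:B)` for two helpers `C` and `D`: the
minimum of `I(A T⟩B T̄)_ψ` over all four subsets `T ⊆ {C, D}`. -/
noncomputable def IcminCD : ℝ :=
  min (min (cutEmpty ψ) (cutC ψ)) (min (cutD ψ) (cutCD ψ))

/-- For a one-dimensional chain `ψ = ψ₁ ⊗ ψ₂ ⊗ ψ₃` with `ψ₁` on `A ⊗ C₁`, `ψ₂` on `C₂ ⊗ D₁`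
and `ψ₃` on `D₂ ⊗ B`:
(i) `I(AC⟩BD)_ψ = I(C₂⟩D₁)_{ψ₂} - S(AC₁)_{ψ₁}`;
(ii) `I(ACD⟩B)_ψ = I(D₂⟩B)_{ψ₃} - S(AC₁)_{ψ₁} - S(C₂D₁)_{ψ₂}`;
(iii) `I(A⟩BCD)_ψ = I(A⟩C₁)_{ψ₁}`.
Consequently `I^c_min(ψ, A:B) ≤ min { I(A⟩C₁)_{ψ₁}, I(C₂⟩D₁)_{ψ₂}, I(D₂⟩B)_{ψ₃} }`. -/
theorem chain_cut_bounds (ψ₁ : Matrix (A × C₁) (A × C₁) ℂ)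
    (ψ₂ : Matrix (C₂ × D₁) (C₂ × D₁) ℂ) (ψ₃ : Matrix (D₂ × B) (D₂ × B) ℂ)
    (h₁ : ψ₁.PosSemidef) (h₁tr : ψ₁.trace = 1)
    (h₂ : ψ₂.PosSemidef) (h₂tr : ψ₂.trace = 1)
    (h₃ : ψ₃.PosSemidef) (h₃tr : ψ₃.trace = 1) :
    cutC (chainState ψ₁ ψ₂ ψ₃)
        = (vNEntropy (trLeft ψ₂) - vNEntropy ψ₂) - vNEntropy ψ₁ ∧
    cutCD (chainState ψ₁ ψ₂ ψ₃)
        = (vNEntropy (trLeft ψ₃) - vNEntropy ψ₃) - vNEntropy ψ₁ - vNEntropy ψ₂ ∧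
    cutEmpty (chainState ψ₁ ψ₂ ψ₃)
        = vNEntropy (trLeft ψ₁) - vNEntropy ψ₁ ∧
    IcminCD (chainState ψ₁ ψ₂ ψ₃)
        ≤ min (vNEntropy (trLeft ψ₁) - vNEntropy ψ₁)
            (min (vNEntropy (trLeft ψ₂) - vNEntropy ψ₂)
              (vNEntropy (trLeft ψ₃) - vNEntropy ψ₃)) := by
  have hH1 := h₁.1
  have hH2 := h₂.1
  have hH3 := h₃.1
  let e₁ : (A × B × C₁ × C₂ × D₁ × D₂) ≃ (((A × C₁) × (C₂ × D₁)) × (D₂ × B)) :=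
    ⟨fun p => (((p.1, p.2.2.1), (p.2.2.2.1, p.2.2.2.2.1)), (p.2.2.2.2.2, p.2.1)),
     fun q => (q.1.1.1, q.2.2, q.1.1.2, q.1.2.1, q.1.2.2, q.2.1),
     fun _ => rfl, fun _ => rfl⟩
  let e₂ : (B × D₁ × D₂) ≃ (D₁ × (D₂ × B)) :=
    ⟨fun p => (p.2.1, (p.2.2, p.1)), fun q => (q.2.2, q.1, q.2.1),
     fun _ => rfl, fun _ => rfl⟩
  let e₃ : (B × C₁ × C₂ × D₁ × D₂) ≃ ((C₁ × (C₂ × D₁)) × (D₂ × B)) :=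
    ⟨fun p => ((p.2.1, (p.2.2.1, p.2.2.2.1)), (p.2.2.2.2, p.1)),
     fun q => (q.2.2, q.1.1, q.1.2.1, q.1.2.2, q.2.1),
     fun _ => rfl, fun _ => rfl⟩
  have htrψ₁ : (∑ a, ∑ c₁, ψ₁ (a, c₁) (a, c₁)) = 1 := by
    rw [← h₁tr, Matrix.trace, Fintype.sum_prod_type]
    rfl
  have htrψ₂ : (∑ c₂, ∑ d₁, ψ₂ (c₂, d₁) (c₂, d₁)) = 1 := by
    rw [← h₂tr, Matrix.trace, Fintype.sum_prod_type]
    rfl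
  have hchain : chainState ψ₁ ψ₂ ψ₃ = ((ψ₁ ⊗ₖ ψ₂) ⊗ₖ ψ₃).submatrix e₁ e₁ := by
    ext p q
    rfl
  have hBCD : redBCD (chainState ψ₁ ψ₂ ψ₃) = (((trLeft ψ₁) ⊗ₖ ψ₂) ⊗ₖ ψ₃).submatrix e₃ e₃ := by
    ext p q
    simp only [redBCD, chainState, Matrix.submatrix_apply, Matrix.kroneckerMap_apply, trLeft,
      Equiv.coe_fn_mk, Finset.sum_mul, e₃]
  have hBD : redBD (chainState ψ₁ ψ₂ ψ₃) = ((trLeft ψ₂) ⊗ₖ ψ₃).submatrix e₂ e₂ := by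
    ext p q
    simp only [redBD, chainState, Matrix.submatrix_apply, Matrix.kroneckerMap_apply, trLeft,
      Equiv.coe_fn_mk, e₂]
    simp only [mul_assoc, ← Finset.mul_sum, ← Finset.sum_mul]
    rw [htrψ₁, one_mul]
  have hB6 : redB6 (chainState ψ₁ ψ₂ ψ₃) = trLeft ψ₃ := by
    ext b b'
    simp only [redB6, chainState, trLeft]
    simp only [mul_assoc, ← Finset.mul_sum, ← Finset.sum_mul]
    rw [htrψ₁, htrψ₂, one_mul, one_mul]
  have hk12 : (ψ₁ ⊗ₖ ψ₂).IsHermitian := kron_isHermitian hH1 hH2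
  have ht12 : (ψ₁ ⊗ₖ ψ₂).trace = 1 := by
    rw [Matrix.trace_kronecker, h₁tr, h₂tr, mul_one]
  have hT1 := trLeft_isHermitian hH1
  have hT2 := trLeft_isHermitian hH2
  have hT1t : (trLeft ψ₁).trace = 1 := by rw [trLeft_trace, h₁tr]
  have hT2t : (trLeft ψ₂).trace = 1 := by rw [trLeft_trace, h₂tr]
  have hk12' : ((trLeft ψ₁) ⊗ₖ ψ₂).IsHermitian := kron_isHermitian hT1 hH2
  have ht12' : ((trLeft ψ₁) ⊗ₖ ψ₂).trace = 1 := by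
    rw [Matrix.trace_kronecker, hT1t, h₂tr, mul_one]
  have hSψ : vNEntropy (chainState ψ₁ ψ₂ ψ₃) = vNEntropy ψ₁ + vNEntropy ψ₂ + vNEntropy ψ₃ := by
    rw [hchain, vNEntropy_submatrix e₁ (kron_isHermitian hk12 hH3),
      vNEntropy_kron hk12 hH3 ht12 h₃tr, vNEntropy_kron hH1 hH2 h₁tr h₂tr]
  have hSBD : vNEntropy (redBD (chainState ψ₁ ψ₂ ψ₃))
      = vNEntropy (trLeft ψ₂) + vNEntropy ψ₃ := by
    rw [hBD, vNEntropy_submatrix e₂ (kron_isHermitian hT2 hH3),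
      vNEntropy_kron hT2 hH3 hT2t h₃tr]
  have hSBCD : vNEntropy (redBCD (chainState ψ₁ ψ₂ ψ₃))
      = vNEntropy (trLeft ψ₁) + vNEntropy ψ₂ + vNEntropy ψ₃ := by
    rw [hBCD, vNEntropy_submatrix e₃ (kron_isHermitian hk12' hH3),
      vNEntropy_kron hk12' hH3 ht12' h₃tr, vNEntropy_kron hT1 hH2 hT1t h₂tr]
  have hSB6 : vNEntropy (redB6 (chainState ψ₁ ψ₂ ψ₃)) = vNEntropy (trLeft ψ₃) := by
    rw [hB6]
  have hcC : cutC (chainState ψ₁ ψ₂ ψ₃)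
      = (vNEntropy (trLeft ψ₂) - vNEntropy ψ₂) - vNEntropy ψ₁ := by
    rw [cutC, hSBD, hSψ]; ring
  have hcCD : cutCD (chainState ψ₁ ψ₂ ψ₃)
      = (vNEntropy (trLeft ψ₃) - vNEntropy ψ₃) - vNEntropy ψ₁ - vNEntropy ψ₂ := by
    rw [cutCD, hSB6, hSψ]; ring
  have hcE : cutEmpty (chainState ψ₁ ψ₂ ψ₃) = vNEntropy (trLeft ψ₁) - vNEntropy ψ₁ := by
    rw [cutEmpty, hSBCD, hSψ]; ring
  refine ⟨hcC, hcCD, hcE, ?_⟩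
  have hn1 := vNEntropy_nonneg h₁ h₁tr
  have hn2 := vNEntropy_nonneg h₂ h₂tr
  rw [IcminCD]
  refine le_min ?_ (le_min ?_ ?_)
  · exact le_of_le_of_eq ((min_le_left _ _).trans (min_le_left _ _)) hcE
  · refine ((min_le_left _ _).trans (min_le_right _ _)).trans ?_
    rw [hcC]
    linarith
  · refine ((min_le_right _ _).trans (min_le_right _ _)).trans ?_
    rw [hcCD]
    linarith
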